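/- Let n ≥ 1 and let q_1,...,q_n be feasible for Wilkinson's linear program. Then (1/n)·∑_{k=1}^n (q_1 − q_k) ≤ (1/2)·∑_{k=2}^n (ln k)/(k−1) ≤ (ln² n)/4 + ln 2. -/

import Mathlib

open BigOperators

section WilkAux

open Real Finset

private lemma wilk_log_diff_ge {x y : ℝ} (hy : 0 < y) (hx : 0 < x) :
    (x - y)/x ≤ Real.log x - Real.log y := by
  have h := Real.log_le_sub_one_of_pos (show (0:ℝ) < y/x from div_pos hy hx)
  rw [Real.log_div hy.ne' hx.ne'] at h
  have e : y/x - 1 = -((x-y)/x) := by field_simp; ring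
  linarith [e ▸ h]

private lemma wilk_log_diff_le {x y : ℝ} (hy : 0 < y) (hx : 0 < x) :
    Real.log x - Real.log y ≤ (x - y)/y := by
  have h := Real.log_le_sub_one_of_pos (show (0:ℝ) < x/y from div_pos hx hy)
  rw [Real.log_div hx.ne' hy.ne'] at h
  have e : x/y - 1 = (x-y)/y := by field_simp
  linarith [e ▸ h]

private lemma wilk_one_le_log3 : (1:ℝ) ≤ Real.log 3 := by
  have := Real.exp_one_lt_d9
  have h := Real.log_le_log (Real.exp_pos 1) (by linarith : Real.exp 1 ≤ 3)
  rwa [Real.log_exp] at h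

private lemma wilk_log_ge_169 {k : ℝ} (hk : 6 ≤ k) : (1.69:ℝ) ≤ Real.log k := by
  have h3 := wilk_one_le_log3
  have h2 := Real.log_two_gt_d9
  have h6 : Real.log 6 = Real.log 2 + Real.log 3 := by
    rw [show (6:ℝ) = 2*3 by norm_num, Real.log_mul (by norm_num) (by norm_num)]
  have hmono : Real.log 6 ≤ Real.log k := Real.log_le_log (by norm_num) hk
  rw [h6] at hmono
  norm_num at h2 ⊢
  linarith

private lemma wilk_aux3 {k : ℝ} (hk : 6 ≤ k) : 16*k^2 ≤ 23.66*((k-1)^2) := by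
  nlinarith [sq_nonneg (k-6)]

set_option maxHeartbeats 1600000 in
/-- For real k ≥ 6, `log k / k ≤ (log² k − log² (k−1))/2`. -/
private lemma wilk_logk_div_k_le {k : ℝ} (hk : 6 ≤ k) :
    Real.log k / k ≤ ((Real.log k)^2 - (Real.log (k-1))^2)/2 := by
  have hk0 : (0:ℝ) < k := by linarith
  have step : ∀ j : ℝ, 0 ≤ j → j ≤ 7 →
      1/(8*k) + j*(1/(64*k^2)) ≤ Real.log (k - j/8) - Real.log (k - (j+1)/8) := by
    intro j h0 h7
    have hx : (0:ℝ) < k - j/8 := by linarith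
    have hy : (0:ℝ) < k - (j+1)/8 := by linarith
    have hlog' : (1/8)/(k - j/8) ≤ Real.log (k - j/8) - Real.log (k - (j+1)/8) := by
      have h := wilk_log_diff_ge hy hx
      rwa [show (k - j/8) - (k - (j+1)/8) = 1/8 by ring] at h
    refine le_trans ?_ hlog'
    rw [le_div_iff₀ hx]
    have e : (1/(8*k) + j*(1/(64*k^2))) * (k - j/8) = 1/8 - j^2/(512*k^2) := by
      field_simp; ring
    rw [e]
    have : (0:ℝ) ≤ j^2/(512*k^2) := by positivity
    linarith
  have t0 := step 0 (by norm_num) (by norm_num)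
  have t1 := step 1 (by norm_num) (by norm_num)
  have t2 := step 2 (by norm_num) (by norm_num)
  have t3 := step 3 (by norm_num) (by norm_num)
  have t4 := step 4 (by norm_num) (by norm_num)
  have t5 := step 5 (by norm_num) (by norm_num)
  have t6 := step 6 (by norm_num) (by norm_num)
  have t7 := step 7 (by norm_num) (by norm_num)
  norm_num at t0 t1 t2 t3 t4 t5 t6 t7
  set δ := Real.log k - Real.log (k-1) with hδ
  have e1 : (1:ℝ)/k = 8*(k⁻¹*(1/8)) := by ring
  have e2 : (7:ℝ)/(16*k^2) = 28*((k^2)⁻¹*(1/64)) := by ring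
  have hδlo : 1/k + 7/(16*k^2) ≤ δ := by
    rw [hδ]
    linarith [t0,t1,t2,t3,t4,t5,t6,t7,e1,e2]
  have hδhi : δ ≤ 1/(k-1) := by
    have h := wilk_log_diff_le (show (0:ℝ) < k - 1 by linarith) hk0
    have e : (k - (k-1))/(k-1) = 1/(k-1) := by ring
    rw [hδ]
    linarith [e ▸ h]
  have hlog := wilk_log_ge_169 hk
  have h1 : 7/(16*k^2) ≤ δ - 1/k := by linarith
  have h2 : 2*1.69*(7/(16*k^2)) ≤ (2*Real.log k) * (δ - 1/k) := by
    have := mul_le_mul (by linarith : (2*1.69:ℝ) ≤ 2*Real.log k) h1 (by positivity) (by linarith)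
    linarith
  have h3 : 1/((k-1)^2) ≤ 2*1.69*(7/(16*k^2)) := by
    rw [show (2*1.69*(7/(16*k^2)):ℝ) = 23.66/(16*k^2) by ring,
      div_le_div_iff₀ (by nlinarith : (0:ℝ) < (k-1)^2) (by positivity)]
    have := wilk_aux3 hk
    linarith
  have hδpos : 0 ≤ δ := by
    have h1k : (0:ℝ) < 1/k := by positivity
    have h2k : (0:ℝ) ≤ 7/(16*k^2) := by positivity
    linarith
  have h4 : δ^2 ≤ 1/((k-1)^2) := by
    rw [← one_div_pow]
    exact pow_le_pow_left₀ hδpos hδhi 2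
  have expand : 2*Real.log k*(δ - 1/k) = 2*δ*Real.log k - 2*(Real.log k/k) := by
    field_simp
  have key : δ^2 ≤ 2*δ*Real.log k - 2*(Real.log k/k) := by
    rw [← expand]; linarith
  have efin : (Real.log k)^2 - (Real.log (k-1))^2 = 2*δ*Real.log k - δ^2 := by
    rw [hδ]; ring
  rw [efin]
  linarith

private lemma wilk_tail_bound {x : ℝ} (hx : 1 ≤ x) :
    Real.log (x+1)/((x+1)*x) ≤ (Real.log (x+1) + 1)/x - (Real.log (x+2) + 1)/(x+1) := by
  have hx0 : (0:ℝ) < x := by linarith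
  have hx1 : (0:ℝ) < x+1 := by linarith
  obtain ⟨d, hdd⟩ : ∃ d, d = Real.log (x+2) - Real.log (x+1) := ⟨_, rfl⟩
  have hd : d ≤ 1/(x+1) := by
    have h := wilk_log_diff_le hx1 (show (0:ℝ) < x+2 by linarith)
    have e : (x+2 - (x+1))/(x+1) = 1/(x+1) := by ring
    rw [hdd]; linarith [e ▸ h]
  have key : (Real.log (x+1) + 1)/x - (Real.log (x+2) + 1)/(x+1) - Real.log (x+1)/((x+1)*x)
      = (1 - x*d)/((x+1)*x) := by
    rw [hdd]; field_simp; ring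
  have hxd : x*d ≤ 1 := by
    have h1 : x*d ≤ x*(1/(x+1)) := by
      rcases le_or_gt 0 d with h|h
      · exact mul_le_mul_of_nonneg_left hd (by linarith)
      · have : x*d < 0 := mul_neg_of_pos_of_neg hx0 h
        have : 0 < x*(1/(x+1)) := by positivity
        linarith
    have h2 : x*(1/(x+1)) ≤ 1 := by
      rw [mul_one_div, div_le_one hx1]; linarith
    linarith
  have hnn : 0 ≤ (1 - x*d)/((x+1)*x) := by
    apply div_nonneg (by linarith) (by positivity)
  linarith

/-- Main sum induction from 5. -/
private lemma wilk_sum_log_bound (n : ℕ) (hn : 5 ≤ n) :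
    (∑ k ∈ Finset.Icc 2 n, Real.log k / ((k:ℝ) - 1)) + (Real.log (n+1) + 1)/n ≤
      (Real.log n)^2/2 + ((∑ k ∈ Finset.Icc (2:ℕ) 5, Real.log k / ((k:ℝ) - 1))
        - (Real.log 5)^2/2 + (Real.log 6 + 1)/5) := by
  induction n, hn using Nat.le_induction with
  | base =>
    push_cast
    norm_num
    linarith
  | succ n hn ih =>
    have h5 : (5:ℝ) ≤ (n:ℝ) := by exact_mod_cast hn
    have hx1 : (1:ℝ) ≤ (n:ℝ) := by linarith
    have hx0 : (0:ℝ) < (n:ℝ) := by linarith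
    have hsum : (∑ k ∈ Finset.Icc 2 (n+1), Real.log k / ((k:ℝ) - 1))
        = (∑ k ∈ Finset.Icc 2 n, Real.log k / ((k:ℝ) - 1))
          + Real.log ((n:ℝ)+1) / ((n:ℝ)) := by
      rw [Finset.sum_Icc_succ_top (by omega : 2 ≤ n+1)]
      push_cast
      rw [show ((n:ℝ)+1-1) = (n:ℝ) by ring]
    have hi : Real.log ((n:ℝ)+1) / ((n:ℝ)+1)
        ≤ ((Real.log ((n:ℝ)+1))^2 - (Real.log (n:ℝ))^2)/2 := by
      have h := wilk_logk_div_k_le (show (6:ℝ) ≤ (n:ℝ)+1 by linarith)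
      rwa [show ((n:ℝ)+1-1) = (n:ℝ) by ring] at h
    have hii := wilk_tail_bound hx1
    have hsplit : Real.log ((n:ℝ)+1)/(n:ℝ)
        = Real.log ((n:ℝ)+1)/((n:ℝ)+1) + Real.log ((n:ℝ)+1)/(((n:ℝ)+1)*(n:ℝ)) := by
      field_simp
    rw [hsum]
    push_cast
    push_cast at ih
    rw [show ((n:ℝ)+1+1) = (n:ℝ)+2 by ring]
    linarith [hi, hii, hsplit, ih]

private lemma wilk_sum25 : (∑ k ∈ Finset.Icc (2:ℕ) 5, Real.log k / ((k:ℝ) - 1))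
    = Real.log 2 + Real.log 3/2 + Real.log 4/3 + Real.log 5/4 := by
  rw [show Finset.Icc (2:ℕ) 5 = {2,3,4,5} by rfl]
  norm_num [Finset.sum_insert, Finset.mem_insert]
  ring

private lemma wilk_log3_eq : Real.log 3 = (3*Real.log 2 + Real.log (9/8))/2 := by
  rw [Real.log_div (by norm_num) (by norm_num),
    show (9:ℝ) = 3^2 by norm_num, show (8:ℝ) = 2^3 by norm_num,
    Real.log_pow, Real.log_pow]
  push_cast; ring

private lemma wilk_log5_eq : Real.log 5 = (3*Real.log 2 + Real.log 3 + Real.log (25/24))/2 := by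
  rw [Real.log_div (by norm_num) (by norm_num),
    show (25:ℝ) = 5^2 by norm_num, show (24:ℝ) = 2^3*3 by norm_num,
    Real.log_pow, Real.log_mul (by norm_num) (by norm_num),
    show ((2:ℝ)^3) = 2^(3:ℕ) by norm_num, Real.log_pow]
  push_cast; ring

private lemma wilk_log98_bounds : (1/9:ℝ) ≤ Real.log (9/8) ∧ Real.log (9/8) ≤ 1/8 := by
  constructor
  · have h := wilk_log_diff_ge (show (0:ℝ) < 1 by norm_num) (show (0:ℝ) < 9/8 by norm_num)
    rw [Real.log_one] at h
    norm_num at h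
    linarith
  · have h := Real.log_le_sub_one_of_pos (show (0:ℝ) < 9/8 by norm_num)
    linarith

private lemma wilk_log2524_bounds : (1/25:ℝ) ≤ Real.log (25/24) ∧ Real.log (25/24) ≤ 1/24 := by
  constructor
  · have h := wilk_log_diff_ge (show (0:ℝ) < 1 by norm_num) (show (0:ℝ) < 25/24 by norm_num)
    rw [Real.log_one] at h
    norm_num at h
    linarith
  · have h := Real.log_le_sub_one_of_pos (show (0:ℝ) < 25/24 by norm_num)
    linarith

private lemma wilk_log4_eq : Real.log 4 = 2 * Real.log 2 := by
  rw [show (4:ℝ) = 2^2 by norm_num, Real.log_pow]; push_cast; ring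

private lemma wilk_log6_eq : Real.log 6 = Real.log 2 + Real.log 3 := by
  rw [show (6:ℝ) = 2*3 by norm_num, Real.log_mul (by norm_num) (by norm_num)]

private lemma wilk_const_bound : (∑ k ∈ Finset.Icc (2:ℕ) 5, Real.log k / ((k:ℝ) - 1))
    - (Real.log 5)^2/2 + (Real.log 6 + 1)/5 ≤ 2 * Real.log 2 := by
  rw [wilk_sum25]
  have h2lo := Real.log_two_gt_d9
  have h2hi := Real.log_two_lt_d9
  have h3 := wilk_log3_eq
  have h5 := wilk_log5_eq
  obtain ⟨hu1, hu2⟩ := wilk_log98_bounds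
  obtain ⟨hv1, hv2⟩ := wilk_log2524_bounds
  have hblo : (1.607:ℝ) ≤ Real.log 5 := by
    rw [h5, h3]
    norm_num at h2lo ⊢
    linarith
  have hbsq : 1.607*Real.log 5 - 1.607^2/2 ≤ (Real.log 5)^2/2 := by
    nlinarith [sq_nonneg (Real.log 5 - 1.607)]
  rw [wilk_log4_eq, wilk_log6_eq, h3, h5]
  norm_num at h2lo h2hi hblo hbsq ⊢
  nlinarith [hu1, hu2, hv1, hv2, h2lo, h2hi, hblo, hbsq]

/-- Part 2: the sum bound for all n ≥ 1. -/
private lemma wilk_part2 (n : ℕ) (hn : 1 ≤ n) :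
    (1 / 2 : ℝ) * ∑ k ∈ Finset.Icc 2 n, Real.log k / ((k : ℝ) - 1) ≤
      Real.log n ^ 2 / 4 + Real.log 2 := by
  have h2lo := Real.log_two_gt_d9
  have h2hi := Real.log_two_lt_d9
  have h3o := wilk_one_le_log3
  rcases le_or_gt n 4 with h4 | h4
  · interval_cases n
    · norm_num
      linarith
    · rw [show Finset.Icc (2:ℕ) 2 = {2} by rfl]
      norm_num
      nlinarith
    · rw [show Finset.Icc (2:ℕ) 3 = {2,3} by rfl]
      norm_num [Finset.sum_insert]
      nlinarith
    · rw [show Finset.Icc (2:ℕ) 4 = {2,3,4} by rfl]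
      norm_num [Finset.sum_insert, Finset.mem_insert]
      have h3 := wilk_log3_eq
      obtain ⟨hu1, hu2⟩ := wilk_log98_bounds
      rw [wilk_log4_eq]
      nlinarith
  · have hn5 : 5 ≤ n := by omega
    have h := wilk_sum_log_bound n hn5
    have hc := wilk_const_bound
    have hpos : 0 ≤ (Real.log ((n:ℝ)+1) + 1)/(n:ℝ) := by
      have h1 : (0:ℝ) ≤ Real.log ((n:ℝ)+1) := Real.log_nonneg (by
        have : (1:ℝ) ≤ (n:ℝ) := by exact_mod_cast hn
        linarith)
      have h2 : (0:ℝ) < (n:ℝ) := by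
        have : (1:ℝ) ≤ (n:ℝ) := by exact_mod_cast hn
        linarith
      positivity
    push_cast at h
    linarith

end WilkAux

/-- `q 1, ..., q n` is feasible for Wilkinson's linear program:
`∑_{i=1}^k q_i ≤ (k/2) ln k + k q_k` for every `k = 1, ..., n`. -/
def WilkFeasible (n : ℕ) (q : ℕ → ℝ) : Prop :=
  ∀ k : ℕ, 1 ≤ k → k ≤ n →
    ∑ i ∈ Finset.Icc 1 k, q i ≤ ((k : ℝ) / 2) * Real.log k + (k : ℝ) * q k

private lemma wilk_part1 (n : ℕ) (q : ℕ → ℝ) (hq : WilkFeasible n q) :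
    ∀ m : ℕ, 1 ≤ m → m ≤ n →
    ∑ k ∈ Finset.Icc 1 m, (q 1 - q k) ≤
      ((m:ℝ)/2) * ∑ k ∈ Finset.Icc 2 m, Real.log k / ((k:ℝ)-1) := by
  intro m hm
  induction m, hm using Nat.le_induction with
  | base => intro _; simp
  | succ m hm ih =>
    intro hmn
    have IH := ih (by omega)
    have hfeas := hq (m+1) (by omega) hmn
    have hx1 : (1:ℝ) ≤ (m:ℝ) := by exact_mod_cast hm
    have hx0 : (0:ℝ) < (m:ℝ) := by linarith
    have hS : ∑ k ∈ Finset.Icc 1 (m+1), (q 1 - q k)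
        = (∑ k ∈ Finset.Icc 1 m, (q 1 - q k)) + (q 1 - q (m+1)) :=
      Finset.sum_Icc_succ_top (by omega) _
    have hq' : ∑ i ∈ Finset.Icc 1 (m+1), q i = (∑ i ∈ Finset.Icc 1 m, q i) + q (m+1) :=
      Finset.sum_Icc_succ_top (by omega) _
    have hsub : ∑ k ∈ Finset.Icc 1 m, (q 1 - q k)
        = (m:ℝ) * q 1 - ∑ k ∈ Finset.Icc 1 m, q k := by
      rw [Finset.sum_sub_distrib, Finset.sum_const, Nat.card_Icc]
      simp
    have hR : ∑ k ∈ Finset.Icc 2 (m+1), Real.log k / ((k:ℝ)-1)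
        = (∑ k ∈ Finset.Icc 2 m, Real.log k / ((k:ℝ)-1))
          + Real.log ((m:ℝ)+1)/(m:ℝ) := by
      rw [Finset.sum_Icc_succ_top (by omega : 2 ≤ m+1)]
      push_cast
      rw [show ((m:ℝ)+1-1) = (m:ℝ) by ring]
    have A : (m:ℝ) * (q 1 - q (m+1)) ≤ (∑ k ∈ Finset.Icc 1 m, (q 1 - q k))
        + (((m:ℝ)+1)/2) * Real.log ((m:ℝ)+1) := by
      rw [hq'] at hfeas
      push_cast at hfeas
      rw [hsub]
      nlinarith [hfeas]
    rw [hS, hR]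
    have goalx : (m:ℝ)*((∑ k ∈ Finset.Icc 1 m, (q 1 - q k)) + (q 1 - q (m+1)))
        ≤ (m:ℝ)*((((m:ℝ)+1)/2) * ((∑ k ∈ Finset.Icc 2 m, Real.log k / ((k:ℝ)-1))
            + Real.log ((m:ℝ)+1)/(m:ℝ))) := by
      have e : (m:ℝ)*((((m:ℝ)+1)/2) * ((∑ k ∈ Finset.Icc 2 m, Real.log k / ((k:ℝ)-1))
            + Real.log ((m:ℝ)+1)/(m:ℝ)))
          = (((m:ℝ)+1)/2)*((m:ℝ) * (∑ k ∈ Finset.Icc 2 m, Real.log k / ((k:ℝ)-1)))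
            + (((m:ℝ)+1)/2)*Real.log ((m:ℝ)+1) := by
        field_simp
      rw [e]
      have h1 := mul_le_mul_of_nonneg_left IH (show (0:ℝ) ≤ (m:ℝ)+1 by linarith)
      nlinarith [h1, A]
    have := (mul_le_mul_iff_right₀ hx0).mp goalx
    convert this using 2
    · rfl
    push_cast
    ring

/-- Geometric mean growth bound (Inequality 2.6): for any feasible point of
Wilkinson's linear program,
`(1/n) ∑_{k=1}^n (q_1 - q_k) ≤ (1/2) ∑_{k=2}^n (ln k)/(k-1) ≤ (ln² n)/4 + ln 2`. -/
theorem wilk_geomean_bound (n : ℕ) (hn : 1 ≤ n) (q : ℕ → ℝ) (hq : WilkFeasible n q) :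
    (1 / (n : ℝ)) * ∑ k ∈ Finset.Icc 1 n, (q 1 - q k) ≤
        (1 / 2) * ∑ k ∈ Finset.Icc 2 n, Real.log k / ((k : ℝ) - 1) ∧
      (1 / 2) * ∑ k ∈ Finset.Icc 2 n, Real.log k / ((k : ℝ) - 1) ≤
        Real.log n ^ 2 / 4 + Real.log 2 := by
  constructor
  · have h := wilk_part1 n q hq n hn le_rfl
    have hn0 : (0:ℝ) < (n:ℝ) := by exact_mod_cast hn
    have h2 := mul_le_mul_of_nonneg_left h (show (0:ℝ) ≤ 1/(n:ℝ) by positivity)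
    have e : (1/(n:ℝ)) * (((n:ℝ)/2) * ∑ k ∈ Finset.Icc 2 n, Real.log k / ((k:ℝ)-1))
        = (1/2) * ∑ k ∈ Finset.Icc 2 n, Real.log k / ((k:ℝ)-1) := by
      field_simp
    linarith [e ▸ h2]
  · exact wilk_part2 n hn
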